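/- Discrete elliptic energy bounds (eqs. (90)–(91)): assume the discrete Poincaré inequalities for scalar fields hold with constants C₁, C₂ > 0, i.e. |φ|_0 ≤ C₁ |∇_h φ|_0 for every primary scalar field φ with Σ_{i∈C} A_i φ_i = 0, and |ψ|_0 ≤ C₂ |∇̃⊥_h ψ|_0 for every dual scalar field ψ. Then for every dual scalar field ψ one has |∇̃⊥_h ψ|_0 ≤ (C₂/2) |∇̃_h×(∇̃⊥_h ψ)|_0, and for every primary scalar field φ with Σ_{i∈C} A_i φ_i = 0 one has |∇_h φ|_0 ≤ (C₁/2) |∇_h·(∇_h φ)|_0. Here |·|_0 denotes the respective weighted norms: |φ|_0² = Σ_i A_i φ_i², |ψ|_0² = Σ_ν A_ν ψ_ν², and for discrete vector fields |u|_0² = Σ_e A_e u_e². -/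

import Mathlib

open Finset

noncomputable section

/-- A combinatorial staggered mesh: primary cells `C`, dual cells (vertices) `V`,
edges `E`, with areas, edge lengths, incidence relations and signs. -/
structure StagMesh (C V E : Type) [Fintype C] [Fintype V] [Fintype E]
    [DecidableEq C] [DecidableEq V] where
  /-- primary cell areas -/
  Ac : C → ℝ
  /-- dual cell areas -/
  Av : V → ℝ
  /-- primary edge lengths -/
  l : E → ℝ
  /-- dual edge lengths -/
  d : E → ℝ
  Ac_pos : ∀ i, 0 < Ac i
  Av_pos : ∀ ν, 0 < Av ν
  l_pos : ∀ e, 0 < l e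
  d_pos : ∀ e, 0 < d e
  /-- primary cells incident to an edge -/
  EC : E → Finset C
  /-- vertices (dual cells) incident to an edge -/
  EV : E → Finset V
  /-- sign `n_{e,i}` attached to an incident edge–cell pair -/
  n : E → C → ℝ
  /-- sign `t_{e,ν}` attached to an incident edge–vertex pair -/
  t : E → V → ℝ
  n_sign : ∀ e i, i ∈ EC e → n e i = 1 ∨ n e i = -1
  t_sign : ∀ e ν, ν ∈ EV e → t e ν = 1 ∨ t e ν = -1

namespace StagMesh

variable {C V E : Type} [Fintype C] [Fintype V] [Fintype E]
  [DecidableEq C] [DecidableEq V]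

/-- diamond area `A_e = (1/2) l_e d_e` -/
def Ae (M : StagMesh C V E) (e : E) : ℝ := (1 / 2) * M.l e * M.d e

/-- discrete gradient `[∇_h φ]_e = -(1/d_e) Σ_{i ~ e} n_{e,i} φ_i` -/
def grad (M : StagMesh C V E) (φ : C → ℝ) : E → ℝ :=
  fun e => -(1 / M.d e) * ∑ i ∈ M.EC e, M.n e i * φ i

/-- discrete skew gradient `[∇̃⊥_h ψ]_e = (1/l_e) Σ_{ν ~ e} t_{e,ν} ψ_ν` -/
def skewGrad (M : StagMesh C V E) (ψ : V → ℝ) : E → ℝ :=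
  fun e => (1 / M.l e) * ∑ ν ∈ M.EV e, M.t e ν * ψ ν

/-- discrete divergence `[∇_h·u]_i = (1/A_i) Σ_{e ~ i} l_e n_{e,i} u_e` -/
def dvg (M : StagMesh C V E) (u : E → ℝ) : C → ℝ :=
  fun i => (1 / M.Ac i) * ∑ e ∈ univ.filter (fun e => i ∈ M.EC e), M.l e * M.n e i * u e

/-- discrete curl `[∇̃_h×u]_ν = -(1/A_ν) Σ_{e ~ ν} d_e t_{e,ν} u_e` -/
def curl (M : StagMesh C V E) (u : E → ℝ) : V → ℝ :=
  fun ν => -(1 / M.Av ν) * ∑ e ∈ univ.filter (fun e => ν ∈ M.EV e), M.d e * M.t e ν * u e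

/-- area-weighted inner product on primary scalar fields -/
def innerC (M : StagMesh C V E) (φ φ' : C → ℝ) : ℝ := ∑ i, M.Ac i * φ i * φ' i

/-- area-weighted inner product on dual scalar fields -/
def innerV (M : StagMesh C V E) (ψ ψ' : V → ℝ) : ℝ := ∑ ν, M.Av ν * ψ ν * ψ' ν

/-- diamond-weighted inner product on discrete vector fields -/
def innerE (M : StagMesh C V E) (u u' : E → ℝ) : ℝ := ∑ e, M.Ae e * u e * u' e

/-- weighted `L²` norm on primary scalar fields -/
noncomputable def normC (M : StagMesh C V E) (φ : C → ℝ) : ℝ := Real.sqrt (M.innerC φ φ)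

/-- weighted `L²` norm on dual scalar fields -/
noncomputable def normV (M : StagMesh C V E) (ψ : V → ℝ) : ℝ := Real.sqrt (M.innerV ψ ψ)

/-- weighted `L²` norm on discrete vector fields -/
noncomputable def normE (M : StagMesh C V E) (u : E → ℝ) : ℝ := Real.sqrt (M.innerE u u)

/-- sign-cancellation condition: for every primary cell `i` and vertex `ν`,
`Σ_{e ~ i, e ~ ν} t_{e,ν} n_{e,i} = 0`. -/
def SgnCancel (M : StagMesh C V E) : Prop :=
  ∀ (i : C) (ν : V),
    ∑ e ∈ univ.filter (fun e => i ∈ M.EC e ∧ ν ∈ M.EV e), M.t e ν * M.n e i = 0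

end StagMesh

open StagMesh



open Finset in
private lemma swap_sum {α β : Type} [Fintype α] [Fintype β] [DecidableEq β]
    (S : α → Finset β) (F : α → β → ℝ) :
    ∑ a, ∑ b ∈ S a, F a b = ∑ b, ∑ a ∈ univ.filter (fun a => b ∈ S a), F a b := by
  have h : ∀ a, ∑ b ∈ S a, F a b = ∑ b, if b ∈ S a then F a b else 0 := by
    intro a
    rw [← Finset.sum_filter, Finset.filter_univ_mem]
  simp_rw [h, Finset.sum_filter]
  exact Finset.sum_comm

private lemma weighted_cs {α : Type} [Fintype α] (w a b : α → ℝ) (hw : ∀ x, 0 ≤ w x) :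
    ∑ x, w x * a x * b x ≤
      Real.sqrt (∑ x, w x * a x * a x) * Real.sqrt (∑ x, w x * b x * b x) := by
  have key := Finset.sum_mul_sq_le_sq_mul_sq Finset.univ
    (fun x => Real.sqrt (w x) * a x) (fun x => Real.sqrt (w x) * b x)
  have h1 : ∀ x : α, Real.sqrt (w x) * a x * (Real.sqrt (w x) * b x) = w x * a x * b x := by
    intro x
    have h := Real.mul_self_sqrt (hw x)
    linear_combination (a x * b x) * h
  have h2 : ∀ x : α, (Real.sqrt (w x) * a x) ^ 2 = w x * a x * a x := by
    intro x
    have h := Real.mul_self_sqrt (hw x)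
    linear_combination (a x * a x) * h
  have h3 : ∀ x : α, (Real.sqrt (w x) * b x) ^ 2 = w x * b x * b x := by
    intro x
    have h := Real.mul_self_sqrt (hw x)
    linear_combination (b x * b x) * h
  simp_rw [h1, h2, h3] at key
  calc ∑ x, w x * a x * b x
      ≤ Real.sqrt ((∑ x, w x * a x * b x) ^ 2) := by
        rw [Real.sqrt_sq_eq_abs]; exact le_abs_self _
    _ ≤ Real.sqrt ((∑ x, w x * a x * a x) * ∑ x, w x * b x * b x) :=
        Real.sqrt_le_sqrt key
    _ = _ := Real.sqrt_mul (Finset.sum_nonneg fun x _ => by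
        nlinarith [hw x, sq_nonneg (a x)]) _

open StagMesh in
private lemma sbp_skew {C V E : Type} [Fintype C] [Fintype V] [Fintype E]
    [DecidableEq C] [DecidableEq V] (M : StagMesh C V E) (ψ : V → ℝ) (u : E → ℝ) :
    M.innerE (M.skewGrad ψ) u = -(1/2) * M.innerV ψ (M.curl u) := by
  have hl : ∀ e : E, M.l e ≠ 0 := fun e => (M.l_pos e).ne'
  have hA : ∀ ν : V, M.Av ν ≠ 0 := fun ν => (M.Av_pos ν).ne'
  have lhs : M.innerE (M.skewGrad ψ) u
      = ∑ e, ∑ ν ∈ M.EV e, (1/2) * M.d e * M.t e ν * ψ ν * u e := by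
    unfold StagMesh.innerE StagMesh.skewGrad StagMesh.Ae
    refine Finset.sum_congr rfl fun e _ => ?_
    rw [show (1 / 2 * M.l e * M.d e) * (1 / M.l e * ∑ ν ∈ M.EV e, M.t e ν * ψ ν) * u e
        = (1 / 2 * M.d e * u e) * ∑ ν ∈ M.EV e, M.t e ν * ψ ν from by
      field_simp [hl e]]
    rw [Finset.mul_sum]
    exact Finset.sum_congr rfl fun ν _ => by ring
  have rhs : -(1/2) * M.innerV ψ (M.curl u)
      = ∑ ν, ∑ e ∈ Finset.univ.filter (fun e => ν ∈ M.EV e),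
          (1/2) * M.d e * M.t e ν * ψ ν * u e := by
    unfold StagMesh.innerV StagMesh.curl
    rw [Finset.mul_sum]
    refine Finset.sum_congr rfl fun ν _ => ?_
    rw [show -(1/2) * (M.Av ν * ψ ν * (-(1 / M.Av ν) * ∑ e ∈ Finset.univ.filter
          (fun e => ν ∈ M.EV e), M.d e * M.t e ν * u e))
        = (1/2 * ψ ν) * ∑ e ∈ Finset.univ.filter (fun e => ν ∈ M.EV e),
            M.d e * M.t e ν * u e from by
      field_simp [hA ν]]
    rw [Finset.mul_sum]
    exact Finset.sum_congr rfl fun e _ => by ring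
  rw [lhs, rhs, swap_sum (fun e => M.EV e) (fun e ν => (1/2) * M.d e * M.t e ν * ψ ν * u e)]

open StagMesh in
private lemma sbp_grad {C V E : Type} [Fintype C] [Fintype V] [Fintype E]
    [DecidableEq C] [DecidableEq V] (M : StagMesh C V E) (φ : C → ℝ) (u : E → ℝ) :
    M.innerE (M.grad φ) u = -(1/2) * M.innerC φ (M.dvg u) := by
  have hd : ∀ e : E, M.d e ≠ 0 := fun e => (M.d_pos e).ne'
  have hA : ∀ i : C, M.Ac i ≠ 0 := fun i => (M.Ac_pos i).ne'
  have lhs : M.innerE (M.grad φ) u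
      = ∑ e, ∑ i ∈ M.EC e, -((1/2) * M.l e * M.n e i * φ i * u e) := by
    unfold StagMesh.innerE StagMesh.grad StagMesh.Ae
    refine Finset.sum_congr rfl fun e _ => ?_
    rw [show (1 / 2 * M.l e * M.d e) * (-(1 / M.d e) * ∑ i ∈ M.EC e, M.n e i * φ i) * u e
        = (-(1 / 2) * M.l e * u e) * ∑ i ∈ M.EC e, M.n e i * φ i from by
      field_simp [hd e]]
    rw [Finset.mul_sum]
    exact Finset.sum_congr rfl fun i _ => by ring
  have rhs : -(1/2) * M.innerC φ (M.dvg u)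
      = ∑ i, ∑ e ∈ Finset.univ.filter (fun e => i ∈ M.EC e),
          -((1/2) * M.l e * M.n e i * φ i * u e) := by
    unfold StagMesh.innerC StagMesh.dvg
    rw [Finset.mul_sum]
    refine Finset.sum_congr rfl fun i _ => ?_
    rw [show -(1/2) * (M.Ac i * φ i * ((1 / M.Ac i) * ∑ e ∈ Finset.univ.filter
          (fun e => i ∈ M.EC e), M.l e * M.n e i * u e))
        = (-(1/2) * φ i) * ∑ e ∈ Finset.univ.filter (fun e => i ∈ M.EC e),
            M.l e * M.n e i * u e from by
      field_simp [hA i]]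
    rw [Finset.mul_sum]
    exact Finset.sum_congr rfl fun e _ => by ring
  rw [lhs, rhs, swap_sum (fun e => M.EC e) (fun e i => -((1/2) * M.l e * M.n e i * φ i * u e))]

/-- discrete elliptic energy bounds: assuming the discrete
Poincaré inequalities for scalar fields with constants `C₁, C₂ > 0`, one has
`|∇̃⊥_h ψ|_0 ≤ (C₂/2) |∇̃_h×(∇̃⊥_h ψ)|_0` for every dual scalar field `ψ`, and
`|∇_h φ|_0 ≤ (C₁/2) |∇_h·(∇_h φ)|_0` for every zero-weighted-mean primary
scalar field `φ`. -/
theorem elliptic_energy_bounds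
    {C V E : Type} [Fintype C] [Fintype V] [Fintype E]
    [DecidableEq C] [DecidableEq V]
    (M : StagMesh C V E)
    (C₁ C₂ : ℝ) (hC₁ : 0 < C₁) (hC₂ : 0 < C₂)
    (hP1 : ∀ φ : C → ℝ, (∑ i, M.Ac i * φ i) = 0 → M.normC φ ≤ C₁ * M.normE (M.grad φ))
    (hP2 : ∀ ψ : V → ℝ, M.normV ψ ≤ C₂ * M.normE (M.skewGrad ψ)) :
    (∀ ψ : V → ℝ,
      M.normE (M.skewGrad ψ) ≤ (C₂ / 2) * M.normV (M.curl (M.skewGrad ψ))) ∧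
    (∀ φ : C → ℝ, (∑ i, M.Ac i * φ i) = 0 →
      M.normE (M.grad φ) ≤ (C₁ / 2) * M.normC (M.dvg (M.grad φ))) := by
  have hAe : ∀ e : E, 0 ≤ M.Ae e := fun e =>
    le_of_lt (mul_pos (mul_pos one_half_pos (M.l_pos e)) (M.d_pos e))
  have normE_sq : ∀ u : E → ℝ, M.innerE u u = (M.normE u) ^ 2 := by
    intro u
    rw [StagMesh.normE, Real.sq_sqrt]
    exact Finset.sum_nonneg fun e _ => by nlinarith [hAe e, sq_nonneg (u e)]
  have normE_nonneg : ∀ u : E → ℝ, 0 ≤ M.normE u := fun u => Real.sqrt_nonneg _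
  have normV_nonneg : ∀ ψ : V → ℝ, 0 ≤ M.normV ψ := fun ψ => Real.sqrt_nonneg _
  have normC_nonneg : ∀ φ : C → ℝ, 0 ≤ M.normC φ := fun φ => Real.sqrt_nonneg _
  constructor
  · intro ψ
    set g := M.skewGrad ψ with hg
    set χ := M.curl g with hχ
    have key : (M.normE g) ^ 2 ≤ (C₂ / 2) * M.normV χ * M.normE g := by
      have h1 : (M.normE g) ^ 2 = -(1/2) * M.innerV ψ χ := by
        rw [← normE_sq, hg]; exact sbp_skew M ψ g
      have h2 : -(1/2) * M.innerV ψ χ = (1/2) * ∑ ν, M.Av ν * ψ ν * (-(χ ν)) := by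
        unfold StagMesh.innerV
        rw [Finset.mul_sum, Finset.mul_sum]
        exact Finset.sum_congr rfl fun ν _ => by ring
      have h3 : ∑ ν, M.Av ν * ψ ν * (-(χ ν)) ≤ M.normV ψ * M.normV χ := by
        have := weighted_cs (fun ν => M.Av ν) ψ (fun ν => -(χ ν))
          (fun ν => (M.Av_pos ν).le)
        simpa [StagMesh.normV, StagMesh.innerV, neg_mul_neg] using this
      have h4 : M.normV ψ ≤ C₂ * M.normE g := hP2 ψ
      have h5 : 0 ≤ M.normV χ := normV_nonneg χ
      nlinarith [h1, h2, h3, h4, h5]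
    rcases eq_or_lt_of_le (normE_nonneg g) with h0 | h0
    · rw [← h0]
      exact mul_nonneg (div_nonneg hC₂.le (by norm_num)) (normV_nonneg χ)
    · nlinarith [key, h0]
  · intro φ hφ
    set g := M.grad φ with hg
    set χ := M.dvg g with hχ
    have key : (M.normE g) ^ 2 ≤ (C₁ / 2) * M.normC χ * M.normE g := by
      have h1 : (M.normE g) ^ 2 = -(1/2) * M.innerC φ χ := by
        rw [← normE_sq, hg]; exact sbp_grad M φ g
      have h2 : -(1/2) * M.innerC φ χ = (1/2) * ∑ i, M.Ac i * φ i * (-(χ i)) := by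
        unfold StagMesh.innerC
        rw [Finset.mul_sum, Finset.mul_sum]
        exact Finset.sum_congr rfl fun i _ => by ring
      have h3 : ∑ i, M.Ac i * φ i * (-(χ i)) ≤ M.normC φ * M.normC χ := by
        have := weighted_cs (fun i => M.Ac i) φ (fun i => -(χ i))
          (fun i => (M.Ac_pos i).le)
        simpa [StagMesh.normC, StagMesh.innerC, neg_mul_neg] using this
      have h4 : M.normC φ ≤ C₁ * M.normE g := hP1 φ hφ
      have h5 : 0 ≤ M.normC χ := normC_nonneg χ
      nlinarith [h1, h2, h3, h4, h5]
    rcases eq_or_lt_of_le (normE_nonneg g) with h0 | h0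
    · rw [← h0]
      exact mul_nonneg (div_nonneg hC₁.le (by norm_num)) (normC_nonneg χ)
    · nlinarith [key, h0]
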